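/- Define S_{k,l} ⊆ S_{k+l} as the set of permutations whose cycle decomposition contains at most one element of {k+1,…,k+l} in each cycle. For every σ ∈ S_{k+l} there exists τ ∈ S_l (acting via the inclusion ρ_k : S_l → S_{k+l} permuting {k+1,…,k+l}) such that σ∘ρ_k(τ^{-1}) ∈ S_{k,l}. Moreover, σ∘ρ_k(τ^{-1}) has the maximal number of cycles among all elements in the orbit {σ∘ρ_k(τ') : τ' ∈ S_l}. -/

import Mathlib

/-!
STATEMENT 13: `S_{k,l} ⊆ S_{k+l}` is the set of permutations whose cycle decomposition
contains at most one element of `{k+1,…,k+l}` in each cycle.  For every `σ ∈ S_{k+l}`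
there is `τ ∈ S_l` (included into `S_{k+l}` via `ρ_k`, permuting the last `l` letters)
with `σ ∘ ρ_k(τ⁻¹) ∈ S_{k,l}`; moreover `σ ∘ ρ_k(τ⁻¹)` has the maximal number of cycles
among the elements of the orbit `{σ ∘ ρ_k(τ') : τ' ∈ S_l}`.
-/

/-- The identification of `Fin l` with the last `l` letters `{k,…,k+l-1}` of `Fin (k+l)`. -/
def lastLetters (k l : ℕ) : Fin l ≃ {x : Fin (k + l) // k ≤ (x : ℕ)} where
  toFun i := ⟨⟨k + (i : ℕ), by omega⟩, by simp⟩
  invFun x := ⟨(x : Fin (k + l)) - k, by have := ((x : Fin (k + l))).isLt; have := x.2; omega⟩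
  left_inv i := by ext; simp
  right_inv x := by
    ext
    have := x.2
    simp
    omega

/-- The inclusion `ρ_k : S_l → S_{k+l}` acting on the last `l` letters. -/
def incl (k l : ℕ) (τ : Equiv.Perm (Fin l)) : Equiv.Perm (Fin (k + l)) :=
  τ.extendDomain (lastLetters k l)

/-- `S_{k,l}`: permutations of `Fin (k+l)` having at most one of the last `l` letters in
each cycle. -/
def Skl (k l : ℕ) : Set (Equiv.Perm (Fin (k + l))) :=
  {σ | ∀ x y : Fin (k + l), k ≤ (x : ℕ) → k ≤ (y : ℕ) → σ.SameCycle x y → x = y}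

/-- The total number of cycles of a permutation (counting fixed points as 1-cycles). -/
noncomputable def numCycles {m : ℕ} (σ : Equiv.Perm (Fin m)) : ℕ :=
  σ.cycleType.card + (Finset.univ.filter fun x : Fin m => σ x = x).card

section Aux

open Equiv Equiv.Perm Finset

set_option linter.unusedSectionVars false

variable {α : Type*} [Fintype α] [DecidableEq α]

/-- The same-cycle setoid of a permutation. -/
def scSetoid (ρ : Perm α) : Setoid α :=
  ⟨ρ.SameCycle, ⟨fun x => SameCycle.refl ρ x, SameCycle.symm, SameCycle.trans⟩⟩

/-- Classifying map: each point goes to its cycle or is recorded as a fixed point. -/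
def cycPoint (ρ : Perm α) (x : α) :
    {c : Perm α // c ∈ ρ.cycleFactorsFinset} ⊕ {y : α // ρ y = y} :=
  if h : ρ x = x then .inr ⟨x, h⟩
  else .inl ⟨ρ.cycleOf x,
    Equiv.Perm.cycleOf_mem_cycleFactorsFinset_iff.2 (Equiv.Perm.mem_support.2 h)⟩

lemma cycPoint_eq (ρ : Perm α) {a b : α} (h : ρ.SameCycle a b) :
    cycPoint ρ a = cycPoint ρ b := by
  by_cases ha : ρ a = a
  · obtain ⟨i, hi⟩ := h
    have : b = a := by rw [← hi, Equiv.Perm.zpow_apply_eq_self_of_apply_eq_self ha]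
    subst this; rfl
  · have hb : ¬ ρ b = b := by
      intro hb
      obtain ⟨i, hi⟩ := h.symm
      have : a = b := by rw [← hi, Equiv.Perm.zpow_apply_eq_self_of_apply_eq_self hb]
      exact ha (this ▸ hb)
    simp only [cycPoint, dif_neg ha, dif_neg hb]
    exact congrArg _ (Subtype.ext (h.cycleOf_eq))

lemma cycPoint_bij (ρ : Perm α) :
    Function.Bijective (Quotient.lift (cycPoint ρ) (fun _ _ h => cycPoint_eq ρ h) :
      Quotient (scSetoid ρ) → _) := by
  constructor
  · intro q₁ q₂
    induction q₁ using Quotient.inductionOn with | _ a =>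
    induction q₂ using Quotient.inductionOn with | _ b =>
    intro h
    simp only [Quotient.lift_mk] at h
    refine Quotient.sound ?_
    by_cases ha : ρ a = a <;> by_cases hb : ρ b = b
    · simp only [cycPoint, dif_pos ha, dif_pos hb, Sum.inr.injEq, Subtype.mk.injEq] at h
      exact h ▸ SameCycle.refl ρ _
    · simp only [cycPoint, dif_pos ha, dif_neg hb] at h
      exact absurd h (by simp)
    · simp only [cycPoint, dif_neg ha, dif_pos hb] at h
      exact absurd h (by simp)
    · simp only [cycPoint, dif_neg ha, dif_neg hb, Sum.inl.injEq, Subtype.mk.injEq] at h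
      have hco : ρ.cycleOf a = ρ.cycleOf b := h
      have hbmem : b ∈ (ρ.cycleOf a).support := by
        rw [hco]
        exact Equiv.Perm.mem_support_cycleOf_iff.2
          ⟨SameCycle.refl ρ b, Equiv.Perm.mem_support.2 hb⟩
      exact (Equiv.Perm.mem_support_cycleOf_iff.1 hbmem).1
  · rintro (⟨c, hc⟩ | ⟨y, hy⟩)
    · have hcyc : c.IsCycle := (Equiv.Perm.mem_cycleFactorsFinset_iff.1 hc).1
      obtain ⟨a, ha, -⟩ := hcyc
      have hasup : a ∈ c.support := Equiv.Perm.mem_support.2 ha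
      have hca : c = ρ.cycleOf a := Equiv.Perm.cycle_is_cycleOf hasup hc
      have hρa : ¬ ρ a = a := by
        have := (Equiv.Perm.mem_cycleFactorsFinset_iff.1 hc).2 a hasup
        rw [← this]; exact ha
      refine ⟨Quotient.mk _ a, ?_⟩
      simp only [Quotient.lift_mk, cycPoint, dif_neg hρa]
      exact congrArg _ (Subtype.ext hca.symm)
    · exact ⟨Quotient.mk _ y, by simp only [Quotient.lift_mk, cycPoint, dif_pos hy]⟩

lemma numCycles_eq_card (ρ : Perm α) :
    Multiset.card ρ.cycleType + (Finset.univ.filter fun x : α => ρ x = x).card =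
      Nat.card (Quotient (scSetoid ρ)) := by
  rw [Nat.card_congr (Equiv.ofBijective _ (cycPoint_bij ρ)), Nat.card_sum,
    Nat.card_eq_fintype_card, Nat.card_eq_fintype_card, Fintype.card_coe,
    Fintype.card_subtype]
  congr 1
  rw [Equiv.Perm.cycleType_def, Multiset.card_map]
  rfl

lemma sign_eq_pow (ρ : Perm α) :
    Equiv.Perm.sign ρ = (-1 : ℤˣ) ^ (Fintype.card α +
      (Multiset.card ρ.cycleType + (Finset.univ.filter fun x : α => ρ x = x).card)) := by
  rw [Equiv.Perm.sign_of_cycleType, Equiv.Perm.sum_cycleType]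
  have hsupp : ρ.support = Finset.univ.filter (fun x => ¬ ρ x = x) := by
    ext a; simp [Equiv.Perm.mem_support]
  have hcard : ρ.support.card + (Finset.univ.filter fun x : α => ρ x = x).card
      = Fintype.card α := by
    rw [hsupp, ← Finset.card_univ, add_comm,
      Finset.card_filter_add_card_filter_not]
  have hexp : Fintype.card α +
      (Multiset.card ρ.cycleType + (Finset.univ.filter fun x : α => ρ x = x).card)
      = (ρ.support.card + Multiset.card ρ.cycleType) +
        2 * (Finset.univ.filter fun x : α => ρ x = x).card := by omega
  rw [hexp]
  conv_rhs => rw [pow_add, pow_mul]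
  norm_num

lemma sc_step (ρ : Perm α) {x y : α} (hxy : ρ.SameCycle x y) (a : α) :
    ρ.SameCycle a ((ρ * Equiv.swap x y) a) := by
  rcases eq_or_ne a x with rfl | hax
  · rw [Equiv.Perm.mul_apply, Equiv.swap_apply_left]
    exact Equiv.Perm.sameCycle_apply_right.2 hxy
  rcases eq_or_ne a y with rfl | hay
  · rw [Equiv.Perm.mul_apply, Equiv.swap_apply_right]
    exact Equiv.Perm.sameCycle_apply_right.2 hxy.symm
  · rw [Equiv.Perm.mul_apply, Equiv.swap_apply_of_ne_of_ne hax hay]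
    exact Equiv.Perm.sameCycle_apply_right.2 (SameCycle.refl ρ a)

lemma sc_mono (ρ : Perm α) {x y : α} (hxy : ρ.SameCycle x y) {a b : α}
    (h : (ρ * Equiv.swap x y).SameCycle a b) : ρ.SameCycle a b := by
  set π' := ρ * Equiv.swap x y with hπ'
  obtain ⟨i, hi⟩ := h
  suffices H : ∀ i : ℤ, ρ.SameCycle a ((π' ^ i) a) by
    rw [← hi]; exact H i
  intro i
  induction i using Int.induction_on with
  | zero => simpa using SameCycle.refl ρ a
  | succ n ih =>
      have hstep : (π' ^ ((n : ℤ) + 1)) a = π' ((π' ^ (n : ℤ)) a) := by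
        rw [add_comm, zpow_add, zpow_one, Equiv.Perm.mul_apply]
      rw [hstep]
      exact ih.trans (sc_step ρ hxy _)
  | pred n ih =>
      have hstep : (π' ^ (-(n : ℤ) - 1)) a = π'⁻¹ ((π' ^ (-(n : ℤ))) a) := by
        have : (-(n : ℤ) - 1) = -1 + -(n : ℤ) := by ring
        rw [this, zpow_add, zpow_neg_one, Equiv.Perm.mul_apply]
      rw [hstep]
      refine ih.trans ?_
      have := sc_step ρ hxy (π'⁻¹ ((π' ^ (-(n : ℤ))) a))
      rw [Equiv.Perm.coe_inv, Equiv.apply_symm_apply] at this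
      exact this.symm

/-- Multiplying on the right by a transposition of two elements lying in the same cycle
strictly increases the number of cycles. -/
lemma numCycles_lt_mul_swap {m : ℕ} (ρ : Equiv.Perm (Fin m)) {x y : Fin m} (hne : x ≠ y)
    (hxy : ρ.SameCycle x y) : numCycles ρ < numCycles (ρ * Equiv.swap x y) := by
  have hle : numCycles ρ ≤ numCycles (ρ * Equiv.swap x y) := by
    show Multiset.card ρ.cycleType + _ ≤ Multiset.card (ρ * Equiv.swap x y).cycleType + _
    rw [numCycles_eq_card, numCycles_eq_card]
    exact Nat.card_le_card_of_surjective
      (Quotient.map' id (fun a b h => sc_mono ρ hxy h))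
      (fun q => Quotient.inductionOn q (fun a => ⟨Quotient.mk'' a, rfl⟩))
  refine lt_of_le_of_ne hle ?_
  intro heq
  have hs : Equiv.Perm.sign (ρ * Equiv.swap x y) = Equiv.Perm.sign ρ * (-1) := by
    rw [map_mul, Equiv.Perm.sign_swap hne]
  have e1 : Equiv.Perm.sign ρ = (-1 : ℤˣ) ^ (Fintype.card (Fin m) + numCycles ρ) :=
    sign_eq_pow ρ
  have e2 : Equiv.Perm.sign (ρ * Equiv.swap x y) =
      (-1 : ℤˣ) ^ (Fintype.card (Fin m) + numCycles (ρ * Equiv.swap x y)) :=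
    sign_eq_pow _
  rw [e1, e2, ← heq] at hs
  exact absurd (left_eq_mul.mp hs) (by decide)

lemma incl_swap (k l : ℕ) (i j : Fin l) :
    incl k l (Equiv.swap i j) =
      Equiv.swap ((lastLetters k l i : {x : Fin (k + l) // k ≤ (x : ℕ)}) : Fin (k + l))
        ((lastLetters k l j : {x : Fin (k + l) // k ≤ (x : ℕ)}) : Fin (k + l)) := by
  set X := ((lastLetters k l i : {x : Fin (k + l) // k ≤ (x : ℕ)}) : Fin (k + l)) with hX
  set Y := ((lastLetters k l j : {x : Fin (k + l) // k ≤ (x : ℕ)}) : Fin (k + l)) with hY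
  ext a
  by_cases ha : k ≤ (a : ℕ)
  · rw [incl, Equiv.Perm.extendDomain_apply_subtype _ (lastLetters k l) ha]
    set b := (lastLetters k l).symm ⟨a, ha⟩ with hb
    have hab : ((lastLetters k l b : {x : Fin (k + l) // k ≤ (x : ℕ)}) : Fin (k + l)) = a := by
      rw [hb, Equiv.apply_symm_apply]
    rcases eq_or_ne b i with rfl | hbi
    · have hax : a = X := by rw [← hab]
      rw [Equiv.swap_apply_left, hax, Equiv.swap_apply_left, hY]
    rcases eq_or_ne b j with rfl | hbj
    · have hay : a = Y := by rw [← hab]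
      rw [Equiv.swap_apply_right, hay, Equiv.swap_apply_right, hX]
    · have haX : a ≠ X := by
        intro h
        apply hbi
        have hsub : (⟨a, ha⟩ : {x : Fin (k + l) // k ≤ (x : ℕ)}) = lastLetters k l i :=
          Subtype.ext h
        rw [hb, hsub, Equiv.symm_apply_apply]
      have haY : a ≠ Y := by
        intro h
        apply hbj
        have hsub : (⟨a, ha⟩ : {x : Fin (k + l) // k ≤ (x : ℕ)}) = lastLetters k l j :=
          Subtype.ext h
        rw [hb, hsub, Equiv.symm_apply_apply]
      rw [Equiv.swap_apply_of_ne_of_ne hbi hbj, hab,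
        Equiv.swap_apply_of_ne_of_ne haX haY]
  · rw [incl, Equiv.Perm.extendDomain_apply_not_subtype _ (lastLetters k l) ha]
    have haX : a ≠ X := fun h => ha (h ▸ (lastLetters k l i).2)
    have haY : a ≠ Y := fun h => ha (h ▸ (lastLetters k l j).2)
    rw [Equiv.swap_apply_of_ne_of_ne haX haY]

lemma incl_mul (k l : ℕ) (a b : Equiv.Perm (Fin l)) :
    incl k l a * incl k l b = incl k l (a * b) := by
  rw [incl, incl, incl, Equiv.Perm.extendDomain_mul]

end Aux

theorem stmt13 (k l : ℕ) (σ : Equiv.Perm (Fin (k + l))) :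
    ∃ τ : Equiv.Perm (Fin l),
      σ * (incl k l τ)⁻¹ ∈ Skl k l ∧
      ∀ τ' : Equiv.Perm (Fin l),
        numCycles (σ * incl k l τ') ≤ numCycles (σ * (incl k l τ)⁻¹) := by
  obtain ⟨τ₀, -, hmax⟩ := Finset.exists_max_image (Finset.univ : Finset (Equiv.Perm (Fin l)))
    (fun τ' => numCycles (σ * incl k l τ')) ⟨1, Finset.mem_univ 1⟩
  have hinv : (incl k l τ₀⁻¹)⁻¹ = incl k l τ₀ := by
    rw [incl, incl, Equiv.Perm.extendDomain_inv, inv_inv]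
  refine ⟨τ₀⁻¹, ?_, ?_⟩
  · rw [hinv]
    intro x y hx hy hsc
    by_contra hne
    set i := (lastLetters k l).symm ⟨x, hx⟩ with hi
    set j := (lastLetters k l).symm ⟨y, hy⟩ with hj
    have hXx : ((lastLetters k l i : {x : Fin (k + l) // k ≤ (x : ℕ)}) : Fin (k + l)) = x := by
      rw [hi, Equiv.apply_symm_apply]
    have hYy : ((lastLetters k l j : {x : Fin (k + l) // k ≤ (x : ℕ)}) : Fin (k + l)) = y := by
      rw [hj, Equiv.apply_symm_apply]
    have hswap : incl k l (Equiv.swap i j) = Equiv.swap x y := by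
      rw [incl_swap, hXx, hYy]
    have hlt := numCycles_lt_mul_swap (σ * incl k l τ₀) hne hsc
    rw [← hswap, mul_assoc, incl_mul] at hlt
    exact absurd (hmax (τ₀ * Equiv.swap i j) (Finset.mem_univ _)) (not_le.2 hlt)
  · intro τ'
    rw [hinv]
    exact hmax τ' (Finset.mem_univ _)
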